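/- Let 0 < β < 1, τ > 0, h > 0, and M ≥ 1, N ≥ 1 integers, and define d_k^{(β)} = (k+1)^{1−β} − k^{1−β} for integers k ≥ 0. Let U^0, U^1, …, U^N be grid functions in V_h (i.e., U^n_0 = U^n_M = 0 for each n). Then Σ_{n=1}^{N} [Σ_{k=1}^{n} d_{n−k}^{(β)} · (∇_t(δ_x² U^k), ∇_t U^n) + Σ_{k=1}^{n−1} d_{n−1−k}^{(β)} · (∇_t(δ_x² U^k), ∇_t U^n)] ≤ 0. -/

import Mathlib

open Finset MeasureTheory Set Real

section analysis
variable {γ : ℝ}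

/-- The scaling kernel. -/
noncomputable def fker (γ t x : ℝ) : ℝ := (1 - Real.exp (-(t * x))) * x ^ (-γ - 1)

lemma fker_nonneg (hγ1 : γ < 1) {t : ℝ} (ht : 0 ≤ t) {x : ℝ} (hx : 0 < x) :
    0 ≤ fker γ t x := by
  apply mul_nonneg
  · have : Real.exp (-(t * x)) ≤ 1 := Real.exp_le_one_iff.mpr (by nlinarith)
    linarith
  · positivity

lemma fker_contOn (γ t : ℝ) : ContinuousOn (fker γ t) (Ioi 0) := by
  apply ContinuousOn.mul
  · exact (continuous_const.sub (Real.continuous_exp.comp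
      (continuous_const.mul continuous_id).neg)).continuousOn
  · exact fun x hx => (Real.continuousAt_rpow_const x _ (Or.inl (ne_of_gt hx))).continuousWithinAt

lemma fker_integrable (hγ0 : 0 < γ) (hγ1 : γ < 1) {t : ℝ} (ht : 0 ≤ t) :
    IntegrableOn (fker γ t) (Ioi 0) := by
  have hmeas : ∀ s : Set ℝ, s ⊆ Ioi 0 → MeasurableSet s → AEStronglyMeasurable (fker γ t) (volume.restrict s) :=
    fun s hs hsm => ((fker_contOn γ t).mono hs).aestronglyMeasurable hsm
  rw [← Set.Ioc_union_Ioi_eq_Ioi (zero_le_one)]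
  apply IntegrableOn.union
  · -- on Ioc 0 1, bound by t * λ ^ (-γ)
    have hbound : IntegrableOn (fun x : ℝ => t * x ^ (-γ)) (Ioc 0 1) := by
      apply Integrable.const_mul
      have h := (intervalIntegral.intervalIntegrable_rpow' (r := -γ)
        (by linarith) (a := 0) (b := 1))
      rwa [intervalIntegrable_iff_integrableOn_Ioc_of_le zero_le_one] at h
    apply Integrable.mono' hbound (hmeas _ (fun x hx => hx.1) measurableSet_Ioc)
    · filter_upwards [ae_restrict_mem measurableSet_Ioc] with x hx
      have hx0 : (0:ℝ) < x := hx.1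
      have h1 : 0 ≤ fker γ t x := fker_nonneg hγ1 ht hx0
      rw [Real.norm_of_nonneg h1]
      have h2 : 1 - Real.exp (-(t * x)) ≤ t * x := by
        have := Real.add_one_le_exp (-(t * x))
        linarith
      have h3 : (0:ℝ) ≤ x ^ (-γ - 1) := by positivity
      have h4 : fker γ t x ≤ (t * x) * x ^ (-γ - 1) := by
        unfold fker
        apply mul_le_mul_of_nonneg_right h2 h3
      have h5 : x * x ^ (-γ - 1) = x ^ (-γ) := by
        nth_rewrite 1 [← Real.rpow_one x]
        rw [← Real.rpow_add hx0]
        norm_num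
      calc fker γ t x ≤ (t * x) * x ^ (-γ - 1) := h4
        _ = t * (x * x ^ (-γ - 1)) := by ring
        _ = t * x ^ (-γ) := by rw [h5]
  · -- on Ioi 1, bound by λ ^ (-γ-1)
    have hbound : IntegrableOn (fun x : ℝ => x ^ (-γ - 1)) (Ioi 1) :=
      integrableOn_Ioi_rpow_of_lt (by linarith) one_pos
    apply Integrable.mono' hbound (hmeas _ (fun x hx => Set.mem_Ioi.mpr (lt_trans one_pos (Set.mem_Ioi.mp hx))) measurableSet_Ioi)
    · filter_upwards [ae_restrict_mem measurableSet_Ioi] with x hx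
      have hx0 : (0:ℝ) < x := lt_trans one_pos hx
      rw [Real.norm_of_nonneg (fker_nonneg hγ1 ht hx0)]
      unfold fker
      have : Real.exp (-(t * x)) ≥ 0 := (Real.exp_pos _).le
      have h3 : (0:ℝ) ≤ x ^ (-γ - 1) := by positivity
      nlinarith

lemma fker_scaling (hγ0 : 0 < γ) (hγ1 : γ < 1) {t : ℝ} (ht : 0 ≤ t) :
    ∫ x in Ioi (0:ℝ), fker γ t x = t ^ γ * ∫ x in Ioi (0:ℝ), fker γ 1 x := by
  rcases eq_or_lt_of_le ht with rfl | ht'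
  · rw [Real.zero_rpow (ne_of_gt hγ0), zero_mul]
    simp [fker]
  · have key : ∀ x ∈ Ioi (0:ℝ), fker γ t x = t ^ (γ + 1) * fker γ 1 (t * x) := by
      intro x hx
      have hx0 : (0:ℝ) < x := hx
      unfold fker
      rw [one_mul, Real.mul_rpow ht'.le hx0.le]
      have h1 : t ^ (γ + 1) * t ^ (-γ - 1) = 1 := by
        rw [← Real.rpow_add ht']; norm_num
      rw [show t ^ (γ + 1) * ((1 - Real.exp (-(t * x))) * (t ^ (-γ - 1) * x ^ (-γ - 1)))
        = (t ^ (γ + 1) * t ^ (-γ - 1)) * ((1 - Real.exp (-(t * x))) * x ^ (-γ - 1)) from by ring,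
        h1, one_mul]
    calc ∫ x in Ioi (0:ℝ), fker γ t x
        = ∫ x in Ioi (0:ℝ), t ^ (γ + 1) * fker γ 1 (t * x) :=
          setIntegral_congr_fun measurableSet_Ioi key
      _ = t ^ (γ + 1) * ∫ x in Ioi (0:ℝ), fker γ 1 (t * x) := integral_const_mul _ _
      _ = t ^ (γ + 1) * (t⁻¹ * ∫ x in Ioi (0:ℝ), fker γ 1 x) := by
          rw [integral_comp_mul_left_Ioi (fker γ 1) 0 ht', mul_zero, smul_eq_mul]
      _ = t ^ γ * ∫ x in Ioi (0:ℝ), fker γ 1 x := by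
          have h2 : t ^ (γ + 1) * t⁻¹ = t ^ γ := by
            rw [← Real.rpow_neg_one t, ← Real.rpow_add ht']; norm_num
          rw [← mul_assoc, h2]

/-- positivity of the normalizing constant -/
lemma fker_I1_pos (hγ0 : 0 < γ) (hγ1 : γ < 1) :
    0 < ∫ x in Ioi (0:ℝ), fker γ 1 x := by
  have hint : IntegrableOn (fker γ 1) (Ioi 0) := fker_integrable hγ0 hγ1 zero_le_one
  set c : ℝ := (1 - Real.exp (-1)) * 2 ^ (-γ - 1) with hc
  have hcpos : 0 < c := by
    apply mul_pos
    · have : Real.exp (-1) < 1 := Real.exp_lt_one_iff.mpr (by norm_num)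
      linarith
    · positivity
  have hsub : Ioc (1:ℝ) 2 ⊆ Ioi 0 := fun x hx => lt_trans one_pos hx.1
  have step1 : c ≤ ∫ x in Ioc (1:ℝ) 2, fker γ 1 x := by
    have hconst : ∫ _x in Ioc (1:ℝ) 2, c = c := by
      simp [Real.volume_Ioc]
      norm_num
    rw [← hconst]
    apply setIntegral_mono_on ((integrableOn_const_iff).mpr (Or.inr (by simp [Real.volume_Ioc])))
      (hint.mono_set hsub) measurableSet_Ioc
    intro x hx
    have hx1 : (1:ℝ) ≤ x := hx.1.le
    have hx0 : (0:ℝ) < x := lt_of_lt_of_le one_pos hx1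
    unfold fker
    apply mul_le_mul
    · have : Real.exp (-(1 * x)) ≤ Real.exp (-1) := by
        apply Real.exp_le_exp.mpr; linarith
      linarith
    · exact Real.rpow_le_rpow_of_nonpos hx0 hx.2 (by linarith)
    · positivity
    · have : Real.exp (-(1 * x)) ≤ 1 := Real.exp_le_one_iff.mpr (by nlinarith)
      linarith
  have step2 : ∫ x in Ioc (1:ℝ) 2, fker γ 1 x ≤ ∫ x in Ioi (0:ℝ), fker γ 1 x := by
    apply setIntegral_mono_set hint
    · filter_upwards [ae_restrict_mem measurableSet_Ioi] with x hx
      exact fker_nonneg hγ1 zero_le_one hx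
    · exact HasSubset.Subset.eventuallyLE hsub
  linarith

lemma fker_diff (γ : ℝ) (j : ℕ) (x : ℝ) :
    (1 - Real.exp (-x)) * Real.exp (-x) ^ j * x ^ (-γ - 1)
      = fker γ ((j:ℝ) + 1) x - fker γ (j:ℝ) x := by
  unfold fker
  have e1 : Real.exp (-x) ^ j = Real.exp (-((j:ℝ) * x)) := by
    rw [← Real.exp_nat_mul]; ring_nf
  have e2 : Real.exp (-(((j:ℝ) + 1) * x)) = Real.exp (-((j:ℝ) * x)) * Real.exp (-x) := by
    rw [← Real.exp_add]; ring_nf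
  rw [e1, e2]
  ring

/-- The integral representation of `d`. -/
lemma d_integral_rep (hγ0 : 0 < γ) (hγ1 : γ < 1) (j : ℕ) :
    ∫ x in Ioi (0:ℝ), (1 - Real.exp (-x)) * Real.exp (-x) ^ j * x ^ (-γ - 1)
      = (((j:ℝ) + 1) ^ γ - (j:ℝ) ^ γ) * ∫ x in Ioi (0:ℝ), fker γ 1 x := by
  have hjint : IntegrableOn (fker γ (j:ℝ)) (Ioi 0) :=
    fker_integrable hγ0 hγ1 (Nat.cast_nonneg j)
  have hj1int : IntegrableOn (fker γ ((j:ℝ) + 1)) (Ioi 0) :=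
    fker_integrable hγ0 hγ1 (by positivity)
  have key := fker_diff γ j
  calc ∫ x in Ioi (0:ℝ), (1 - Real.exp (-x)) * Real.exp (-x) ^ j * x ^ (-γ - 1)
      = ∫ x in Ioi (0:ℝ), (fker γ ((j:ℝ) + 1) x - fker γ (j:ℝ) x) := by
        apply setIntegral_congr_fun measurableSet_Ioi
        intro x _
        exact key x
    _ = (∫ x in Ioi (0:ℝ), fker γ ((j:ℝ) + 1) x) - ∫ x in Ioi (0:ℝ), fker γ (j:ℝ) x :=
        integral_sub hj1int hjint
    _ = (((j:ℝ) + 1) ^ γ - (j:ℝ) ^ γ) * ∫ x in Ioi (0:ℝ), fker γ 1 x := by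
        rw [fker_scaling hγ0 hγ1 (by positivity : (0:ℝ) ≤ (j:ℝ) + 1),
          fker_scaling hγ0 hγ1 (Nat.cast_nonneg j)]
        ring
end analysis

lemma geo_form_nonneg (ρ : ℝ) (h0 : 0 ≤ ρ) (h1 : ρ ≤ 1) (w : ℕ → ℝ) (N : ℕ) :
    0 ≤ ∑ n ∈ Icc 1 N, ((∑ k ∈ Icc 1 n, ρ ^ (n - k) * (w k * w n))
      + ∑ k ∈ Icc 1 (n - 1), ρ ^ (n - 1 - k) * (w k * w n)) := by
  set S : ℕ → ℝ := fun n => ∑ k ∈ Icc 1 n, ρ ^ (n - k) * w k with hS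
  have hrec : ∀ n : ℕ, S (n + 1) = ρ * S n + w (n + 1) := by
    intro n
    have : S (n + 1) = (∑ k ∈ Icc 1 n, ρ ^ (n + 1 - k) * w k) + ρ ^ (n + 1 - (n + 1)) * w (n + 1) :=
      Finset.sum_Icc_succ_top (by omega) _
    rw [this]
    simp only [Nat.sub_self, pow_zero, one_mul]
    congr 1
    rw [hS, Finset.mul_sum]
    apply Finset.sum_congr rfl
    intro k hk
    simp only [Finset.mem_Icc] at hk
    have : n + 1 - k = (n - k) + 1 := by omega
    rw [this, pow_succ]
    ring
  have main : ∀ N : ℕ, (1 + ρ) / 2 * (S N) ^ 2 ≤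
      ∑ n ∈ Icc 1 N, ((∑ k ∈ Icc 1 n, ρ ^ (n - k) * (w k * w n))
        + ∑ k ∈ Icc 1 (n - 1), ρ ^ (n - 1 - k) * (w k * w n)) := by
    intro N
    induction N with
    | zero => simp [hS]
    | succ N ih =>
      rw [Finset.sum_Icc_succ_top (by omega : 1 ≤ N + 1)]
      have e1 : ∑ k ∈ Icc 1 (N + 1), ρ ^ (N + 1 - k) * (w k * w (N + 1))
          = S (N + 1) * w (N + 1) := by
        rw [hS, Finset.sum_mul]
        exact Finset.sum_congr rfl fun k hk => by ring
      have e2 : ∑ k ∈ Icc 1 (N + 1 - 1), ρ ^ (N + 1 - 1 - k) * (w k * w (N + 1))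
          = S N * w (N + 1) := by
        simp only [Nat.add_sub_cancel]
        rw [hS, Finset.sum_mul]
        exact Finset.sum_congr rfl fun k hk => by ring
      rw [e1, e2]
      have hw : w (N + 1) = S (N + 1) - ρ * S N := by rw [hrec]; ring
      rw [hw]
      nlinarith [ih, mul_nonneg (by linarith : (0:ℝ) ≤ 1 - ρ) (sq_nonneg (S (N + 1) + S N))]
  have := main N
  nlinarith [sq_nonneg (S N)]

/-- Nonnegativity of the weighted quadratic form with kernel `d`. -/
lemma Qd_nonneg (β : ℝ) (hβ0 : 0 < β) (hβ1 : β < 1) (d : ℕ → ℝ)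
    (hd : ∀ k, d k = ((k : ℝ) + 1) ^ (1 - β) - (k : ℝ) ^ (1 - β)) (N : ℕ) (w : ℕ → ℝ) :
    0 ≤ ∑ n ∈ Icc 1 N, ((∑ k ∈ Icc 1 n, d (n - k) * (w k * w n))
      + ∑ k ∈ Icc 1 (n - 1), d (n - 1 - k) * (w k * w n)) := by
  set γ : ℝ := 1 - β with hγ
  have hγ0 : 0 < γ := by simp [hγ]; linarith
  have hγ1 : γ < 1 := by simp [hγ]; linarith
  set I1 : ℝ := ∫ x in Ioi (0:ℝ), fker γ 1 x with hI1def
  have hI1 : 0 < I1 := fker_I1_pos hγ0 hγ1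
  set G : ℕ → ℝ → ℝ := fun j x => (1 - Real.exp (-x)) * Real.exp (-x) ^ j * x ^ (-γ - 1) with hG
  have hGint : ∀ j : ℕ, IntegrableOn (G j) (Ioi 0) := by
    intro j
    have : G j = fun x => fker γ ((j:ℝ) + 1) x - fker γ (j:ℝ) x :=
      funext fun x => fker_diff γ j x
    rw [this]
    exact (fker_integrable hγ0 hγ1 (by positivity)).sub
      (fker_integrable hγ0 hγ1 (Nat.cast_nonneg j))
  have hGd : ∀ j : ℕ, ∫ x in Ioi (0:ℝ), G j x = d j * I1 := by
    intro j
    rw [hd j, hγ] at *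
    exact d_integral_rep hγ0 hγ1 j
  -- swap sum and integral
  have swap : ∫ x in Ioi (0:ℝ), (∑ n ∈ Icc 1 N, ((∑ k ∈ Icc 1 n, G (n - k) x * (w k * w n))
        + ∑ k ∈ Icc 1 (n - 1), G (n - 1 - k) x * (w k * w n)))
      = (∑ n ∈ Icc 1 N, ((∑ k ∈ Icc 1 n, d (n - k) * (w k * w n))
        + ∑ k ∈ Icc 1 (n - 1), d (n - 1 - k) * (w k * w n))) * I1 := by
    rw [integral_finset_sum]
    · rw [Finset.sum_mul]
      apply Finset.sum_congr rfl
      intro n _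
      rw [integral_add (integrable_finset_sum _ (fun k _ => (hGint (n - k)).mul_const _))
          (integrable_finset_sum _ (fun k _ => (hGint (n - 1 - k)).mul_const _)),
        integral_finset_sum _ (fun k _ => (hGint (n - k)).mul_const _),
        integral_finset_sum _ (fun k _ => (hGint (n - 1 - k)).mul_const _)]
      rw [add_mul, Finset.sum_mul, Finset.sum_mul]
      congr 1
      · apply Finset.sum_congr rfl
        intro k _
        rw [MeasureTheory.integral_mul_const, hGd]
        ring
      · apply Finset.sum_congr rfl
        intro k _
        rw [MeasureTheory.integral_mul_const, hGd]
        ring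
    · intro n _
      exact (integrable_finset_sum _ (fun k _ => (hGint (n - k)).mul_const _)).add
        (integrable_finset_sum _ (fun k _ => (hGint (n - 1 - k)).mul_const _))
  have hnonneg : 0 ≤ ∫ x in Ioi (0:ℝ), (∑ n ∈ Icc 1 N, ((∑ k ∈ Icc 1 n, G (n - k) x * (w k * w n))
        + ∑ k ∈ Icc 1 (n - 1), G (n - 1 - k) x * (w k * w n))) := by
    apply setIntegral_nonneg measurableSet_Ioi
    intro x hx
    have hx0 : (0:ℝ) < x := hx
    set ρ : ℝ := Real.exp (-x) with hρ
    have hρ0 : 0 ≤ ρ := (Real.exp_pos _).le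
    have hρ1 : ρ ≤ 1 := Real.exp_le_one_iff.mpr (by linarith)
    set C : ℝ := (1 - ρ) * x ^ (-γ - 1) with hC
    have hCpos : 0 ≤ C := by
      apply mul_nonneg (by linarith) (by positivity)
    have factored : ∀ j : ℕ, ∀ c : ℝ, G j x * c = C * (ρ ^ j * c) := by
      intro j c
      simp only [hG, hC, hρ]
      ring
    calc (0:ℝ) ≤ C * ∑ n ∈ Icc 1 N, ((∑ k ∈ Icc 1 n, ρ ^ (n - k) * (w k * w n))
          + ∑ k ∈ Icc 1 (n - 1), ρ ^ (n - 1 - k) * (w k * w n)) :=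
        mul_nonneg hCpos (geo_form_nonneg ρ hρ0 hρ1 w N)
      _ = ∑ n ∈ Icc 1 N, ((∑ k ∈ Icc 1 n, G (n - k) x * (w k * w n))
          + ∑ k ∈ Icc 1 (n - 1), G (n - 1 - k) x * (w k * w n)) := by
        rw [Finset.mul_sum]
        apply Finset.sum_congr rfl
        intro n _
        rw [mul_add, Finset.mul_sum, Finset.mul_sum]
        congr 1
        · exact Finset.sum_congr rfl fun k _ => (factored _ _).symm
        · exact Finset.sum_congr rfl fun k _ => (factored _ _).symm
  rw [swap] at hnonneg
  nlinarith [hnonneg, hI1]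


/-- Telescoping identity. -/
lemma telesc (b u : ℕ → ℝ) : ∀ P : ℕ, 1 ≤ P →
    (∑ i ∈ Icc 1 P, b i * (u i - u (i - 1)))
      + ∑ i ∈ Icc 1 (P - 1), (b (i + 1) - b i) * u i
    = b P * u P - b 1 * u 0 := by
  intro P
  induction P with
  | zero => omega
  | succ P ih =>
    intro _
    by_cases hP : 1 ≤ P
    · have h1 := ih hP
      rw [Finset.sum_Icc_succ_top (by omega : 1 ≤ P + 1)]
      have : P + 1 - 1 = (P - 1) + 1 := by omega
      rw [this, Finset.sum_Icc_succ_top (by omega : 1 ≤ P - 1 + 1)]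
      have h2 : P - 1 + 1 = P := by omega
      rw [h2]
      linarith
    · have : P = 0 := by omega
      subst this
      simp
      ring
/-- Summation by parts in space: only needs `u` to vanish at the boundary. -/
lemma sbp (v u : ℕ → ℝ) (M : ℕ) (hM : 1 ≤ M) (h0 : u 0 = 0) (hMv : u M = 0) :
    ∑ i ∈ Icc 1 (M - 1), (v (i - 1) - 2 * v i + v (i + 1)) * u i
      = -∑ i ∈ Icc 1 M, (v i - v (i - 1)) * (u i - u (i - 1)) := by
  have key := telesc (fun i => v i - v (i - 1)) u M hM
  have e1 : ∑ i ∈ Icc 1 (M - 1), (v (i - 1) - 2 * v i + v (i + 1)) * u i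
      = ∑ i ∈ Icc 1 (M - 1), ((fun i => v i - v (i - 1)) (i + 1) - (fun i => v i - v (i - 1)) i) * u i := by
    apply Finset.sum_congr rfl
    intro i hi
    simp only [Nat.add_sub_cancel]
    ring
  rw [e1]
  rw [h0, hMv] at key
  simp only at key ⊢
  linarith



/-- The key nonpositivity estimate (39): the averaged double sum of
`d_{n−k}^{(β)} (∇_t(δ_x² U^k), ∇_t U^n)` terms is nonpositive for grid
functions vanishing at the endpoints. -/
theorem weighted_averaged_double_sum_nonpos
    (β τ h : ℝ) (hβ0 : 0 < β) (hβ1 : β < 1) (hτ : 0 < τ) (hh : 0 < h)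
    (M N : ℕ) (hM : 1 ≤ M) (hN : 1 ≤ N)
    (d : ℕ → ℝ) (hd : ∀ k, d k = ((k : ℝ) + 1) ^ (1 - β) - (k : ℝ) ^ (1 - β))
    (U : ℕ → ℕ → ℝ) (hU : ∀ n ≤ N, U n 0 = 0 ∧ U n M = 0) :
    ∑ n ∈ Finset.Icc 1 N,
        ((∑ k ∈ Finset.Icc 1 n, d (n - k) *
            (h * ∑ i ∈ Finset.Icc 1 (M - 1),
              (((U k (i - 1) - 2 * U k i + U k (i + 1)) / h ^ 2
                - (U (k - 1) (i - 1) - 2 * U (k - 1) i + U (k - 1) (i + 1)) / h ^ 2) / τ)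
              * ((U n i - U (n - 1) i) / τ)))
          + ∑ k ∈ Finset.Icc 1 (n - 1), d (n - 1 - k) *
              (h * ∑ i ∈ Finset.Icc 1 (M - 1),
                (((U k (i - 1) - 2 * U k i + U k (i + 1)) / h ^ 2
                  - (U (k - 1) (i - 1) - 2 * U (k - 1) i + U (k - 1) (i + 1)) / h ^ 2) / τ)
                * ((U n i - U (n - 1) i) / τ)))
      ≤ 0 := by
  -- time-difference grid function and its spatial difference
  set W : ℕ → ℕ → ℝ := fun m i => U m i - U (m - 1) i with hWdef
  set D : ℕ → ℕ → ℝ := fun m i => W m i - W m (i - 1) with hDdef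
  set c : ℝ := 1 / (h * τ ^ 2) with hcdef
  have hc : 0 < c := by positivity
  set E' : ℕ → ℕ → ℝ := fun k n => ∑ i ∈ Finset.Icc 1 M, D k i * D n i with hE'def
  -- Step 1: summation by parts in space
  have step1 : ∀ k n : ℕ, n ∈ Finset.Icc 1 N →
      (h * ∑ i ∈ Finset.Icc 1 (M - 1),
          (((U k (i - 1) - 2 * U k i + U k (i + 1)) / h ^ 2
            - (U (k - 1) (i - 1) - 2 * U (k - 1) i + U (k - 1) (i + 1)) / h ^ 2) / τ)
          * ((U n i - U (n - 1) i) / τ))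
        = -(c * E' k n) := by
    intro k n hn
    simp only [Finset.mem_Icc] at hn
    have hW0 : W n 0 = 0 := by
      simp only [hWdef]
      rw [(hU n hn.2).1, (hU (n - 1) (by omega)).1, sub_zero]
    have hWM : W n M = 0 := by
      simp only [hWdef]
      rw [(hU n hn.2).2, (hU (n - 1) (by omega)).2, sub_zero]
    have ptwise : ∀ i : ℕ,
        (((U k (i - 1) - 2 * U k i + U k (i + 1)) / h ^ 2
          - (U (k - 1) (i - 1) - 2 * U (k - 1) i + U (k - 1) (i + 1)) / h ^ 2) / τ)
          * ((U n i - U (n - 1) i) / τ)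
        = 1 / (h ^ 2 * τ ^ 2) * ((W k (i - 1) - 2 * W k i + W k (i + 1)) * W n i) := by
      intro i
      simp only [hWdef]
      field_simp
      ring
    rw [Finset.sum_congr rfl (fun i _ => ptwise i), ← Finset.mul_sum,
      sbp (W k) (W n) M hM hW0 hWM]
    simp only [hE'def, hDdef, hcdef]
    field_simp
  -- rewrite all inner products
  have rw1 : ∑ n ∈ Finset.Icc 1 N,
        ((∑ k ∈ Finset.Icc 1 n, d (n - k) *
            (h * ∑ i ∈ Finset.Icc 1 (M - 1),
              (((U k (i - 1) - 2 * U k i + U k (i + 1)) / h ^ 2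
                - (U (k - 1) (i - 1) - 2 * U (k - 1) i + U (k - 1) (i + 1)) / h ^ 2) / τ)
              * ((U n i - U (n - 1) i) / τ)))
          + ∑ k ∈ Finset.Icc 1 (n - 1), d (n - 1 - k) *
              (h * ∑ i ∈ Finset.Icc 1 (M - 1),
                (((U k (i - 1) - 2 * U k i + U k (i + 1)) / h ^ 2
                  - (U (k - 1) (i - 1) - 2 * U (k - 1) i + U (k - 1) (i + 1)) / h ^ 2) / τ)
                * ((U n i - U (n - 1) i) / τ)))
      = ∑ n ∈ Finset.Icc 1 N,
        ((∑ k ∈ Finset.Icc 1 n, d (n - k) * (-(c * E' k n)))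
          + ∑ k ∈ Finset.Icc 1 (n - 1), d (n - 1 - k) * (-(c * E' k n))) := by
    apply Finset.sum_congr rfl
    intro n hn
    congr 1
    · exact Finset.sum_congr rfl fun k _ => by rw [step1 k n hn]
    · exact Finset.sum_congr rfl fun k _ => by rw [step1 k n hn]
  rw [rw1]
  -- Step 2: pull out the factor -c
  have rw2 : ∑ n ∈ Finset.Icc 1 N,
        ((∑ k ∈ Finset.Icc 1 n, d (n - k) * (-(c * E' k n)))
          + ∑ k ∈ Finset.Icc 1 (n - 1), d (n - 1 - k) * (-(c * E' k n)))
      = -(c * ∑ n ∈ Finset.Icc 1 N,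
          ((∑ k ∈ Finset.Icc 1 n, d (n - k) * E' k n)
            + ∑ k ∈ Finset.Icc 1 (n - 1), d (n - 1 - k) * E' k n)) := by
    rw [Finset.mul_sum, ← Finset.sum_neg_distrib]
    apply Finset.sum_congr rfl
    intro n _
    rw [mul_add, neg_add, Finset.mul_sum, Finset.mul_sum,
      ← Finset.sum_neg_distrib, ← Finset.sum_neg_distrib]
    congr 1
    · exact Finset.sum_congr rfl fun k _ => by ring
    · exact Finset.sum_congr rfl fun k _ => by ring
  rw [rw2]
  -- Step 3: the remaining double sum is nonnegative
  have step3 : 0 ≤ ∑ n ∈ Finset.Icc 1 N,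
      ((∑ k ∈ Finset.Icc 1 n, d (n - k) * E' k n)
        + ∑ k ∈ Finset.Icc 1 (n - 1), d (n - 1 - k) * E' k n) := by
    have inner : ∀ n : ℕ,
        (∑ k ∈ Finset.Icc 1 n, d (n - k) * E' k n)
          + ∑ k ∈ Finset.Icc 1 (n - 1), d (n - 1 - k) * E' k n
        = ∑ i ∈ Finset.Icc 1 M,
            ((∑ k ∈ Finset.Icc 1 n, d (n - k) * (D k i * D n i))
              + ∑ k ∈ Finset.Icc 1 (n - 1), d (n - 1 - k) * (D k i * D n i)) := by
      intro n
      rw [Finset.sum_add_distrib]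
      congr 1
      · rw [Finset.sum_comm]
        exact Finset.sum_congr rfl fun k _ => by
          simp only [hE'def, Finset.mul_sum]
      · rw [Finset.sum_comm]
        exact Finset.sum_congr rfl fun k _ => by
          simp only [hE'def, Finset.mul_sum]
    rw [Finset.sum_congr rfl fun n _ => inner n, Finset.sum_comm]
    apply Finset.sum_nonneg
    intro i _
    exact Qd_nonneg β hβ0 hβ1 d hd N (fun m => D m i)
  nlinarith [mul_nonneg hc.le step3]
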